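/- For the function φ̄_n(x) = (1 − 1_{[1 − 1/(50 q_n), 1)}(x)) · (−1 − log(1−x)) on [0,1), the total variation of φ̄_n equals 2 log(50 q_n) − 1. -/

import Mathlib

open MeasureTheory Set

/-- Triangle-type inequality for variation of a difference of real functions. -/
lemma eVariationOn_sub_le (g h : ℝ → ℝ) (s : Set ℝ) :
    eVariationOn (fun x => g x - h x) s ≤ eVariationOn g s + eVariationOn h s := by
  apply iSup_le
  rintro ⟨n, u, hu, us⟩
  calc
    (∑ i ∈ Finset.range n,
        edist (g (u (i + 1)) - h (u (i + 1))) (g (u i) - h (u i)))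
        ≤ ∑ i ∈ Finset.range n,
          (edist (g (u (i + 1))) (g (u i)) + edist (h (u (i + 1))) (h (u i))) := by
      apply Finset.sum_le_sum
      intro i _
      rw [edist_dist, edist_dist, edist_dist, ← ENNReal.ofReal_add dist_nonneg dist_nonneg]
      apply ENNReal.ofReal_le_ofReal
      rw [Real.dist_eq, Real.dist_eq, Real.dist_eq]
      have : g (u (i + 1)) - h (u (i + 1)) - (g (u i) - h (u i)) =
          (g (u (i + 1)) - g (u i)) - (h (u (i + 1)) - h (u i)) := by ring
      rw [this]
      exact abs_sub _ _
    _ = (∑ i ∈ Finset.range n, edist (g (u (i + 1))) (g (u i))) +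
        ∑ i ∈ Finset.range n, edist (h (u (i + 1))) (h (u i)) := by
      rw [Finset.sum_add_distrib]
    _ ≤ eVariationOn g s + eVariationOn h s :=
      add_le_add (eVariationOn.sum_le (f := g) (n := n) hu us) (eVariationOn.sum_le (f := h) (n := n) hu us)

/-- For the truncated function `φ̄_n` equal to `-1 - log(1-x)` on `[0, 1 - 1/(50 qₙ))`
and `0` on `[1 - 1/(50 qₙ), 1)`, the total variation of `φ̄_n` on `[0,1)` equals
`2 log(50 qₙ) - 1`. -/
theorem stmt4 (q : ℕ) (hq : 1 ≤ q) :
    (eVariationOn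
        (fun x : ℝ => if x < 1 - 1 / (50 * q) then -1 - Real.log (1 - x) else 0)
        (Set.Ico (0 : ℝ) 1)).toReal = 2 * Real.log (50 * q) - 1 := by
  have hq1 : (1 : ℝ) ≤ (q : ℝ) := by exact_mod_cast hq
  set Q : ℝ := 50 * q with hQdef
  have hQ50 : (50 : ℝ) ≤ Q := by rw [hQdef]; nlinarith
  have hQ0 : (0 : ℝ) < Q := by linarith
  set c : ℝ := 1 - 1 / Q with hcdef
  have hQinv : (0 : ℝ) < 1 / Q := by positivity
  have hQinv1 : 1 / Q ≤ 1 / 50 := by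
    apply div_le_div_of_nonneg_left (by norm_num) (by norm_num) hQ50
  have hc0 : (0 : ℝ) < c := by rw [hcdef]; linarith
  have hc1 : c < 1 := by rw [hcdef]; linarith
  set f : ℝ → ℝ := fun x => if x < c then -1 - Real.log (1 - x) else 0 with hfdef
  have hlog1c : Real.log (1 - c) = -Real.log Q := by
    rw [hcdef]
    have : 1 - (1 - 1 / Q) = 1 / Q := by ring
    rw [this, one_div, Real.log_inv]
  -- logarithm bound: 2 ≤ log Q
  have hlogQ : 2 ≤ Real.log Q := by
    rw [Real.le_log_iff_exp_le hQ0]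
    have h2 : Real.exp 2 = Real.exp 1 * Real.exp 1 := by
      rw [← Real.exp_add]; norm_num
    nlinarith [Real.exp_one_lt_d9, Real.exp_pos 1]
  -- value of f at 0 and c
  have hf0 : f 0 = -1 := by
    rw [hfdef]; simp [hc0, Real.log_one]
  have hfc : f c = 0 := by
    rw [hfdef]; simp
  -- Step A: split the variation
  have hsplit : eVariationOn f (Set.Ico (0 : ℝ) 1) = eVariationOn f (Set.Icc 0 c) := by
    have h1 : IsGreatest (Set.Icc (0:ℝ) c) c := ⟨⟨hc0.le, le_refl c⟩, fun x hx => hx.2⟩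
    have h2 : IsLeast (Set.Ico c (1:ℝ)) c := ⟨⟨le_refl c, hc1⟩, fun x hx => hx.1⟩
    rw [← Set.Icc_union_Ico_eq_Ico hc0.le hc1, eVariationOn.union f h1 h2]
    have : eVariationOn f (Set.Ico c 1) = 0 := by
      apply eVariationOn.constant_on
      apply Set.subsingleton_of_subset_singleton (a := (0 : ℝ))
      rintro y ⟨x, hx, rfl⟩
      simp only [hfdef, Set.mem_singleton_iff]
      rw [if_neg (not_lt.2 hx.1)]
    rw [this, add_zero]
  -- Step B: upper bound on Icc 0 c
  have hub : eVariationOn f (Set.Icc 0 c) ≤ ENNReal.ofReal (2 * Real.log Q - 1) := by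
    set g : ℝ → ℝ := fun x => -1 - Real.log (1 - x) with hgdef
    set h : ℝ → ℝ := fun x => if x < c then 0 else Real.log Q - 1 with hhdef
    have heq : eVariationOn f (Set.Icc 0 c) = eVariationOn (fun x => g x - h x) (Set.Icc 0 c) := by
      apply eVariationOn.eq_of_eqOn
      intro x hx
      by_cases hxc : x < c
      · simp [hfdef, hgdef, hhdef, hxc]
      · have hxc' : x = c := le_antisymm hx.2 (not_lt.1 hxc)
        subst hxc'
        show (if c < c then -1 - Real.log (1 - c) else 0)
            = (-1 - Real.log (1 - c)) - (if c < c then 0 else Real.log Q - 1)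
        rw [if_neg hxc, if_neg hxc, hlog1c]
        ring
    have hmg : MonotoneOn g (Set.Icc (0 : ℝ) c) := by
      intro x hx y hy hxy
      simp only [hgdef]
      have hy1 : 0 < 1 - y := by
        have : y ≤ c := hy.2
        linarith
      have : Real.log (1 - y) ≤ Real.log (1 - x) :=
        Real.log_le_log hy1 (by linarith)
      linarith
    have hmh : MonotoneOn h (Set.Icc (0 : ℝ) c) := by
      intro x hx y hy hxy
      simp only [hhdef]
      by_cases hyc : y < c
      · rw [if_pos (lt_of_le_of_lt hxy hyc), if_pos hyc]
      · rw [if_neg hyc]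
        by_cases hxc : x < c
        · rw [if_pos hxc]; linarith
        · rw [if_neg hxc]
    have h0c : (0 : ℝ) ∈ Set.Icc (0 : ℝ) c := ⟨le_refl _, hc0.le⟩
    have hcc : c ∈ Set.Icc (0 : ℝ) c := ⟨hc0.le, le_refl _⟩
    have hgb := hmg.eVariationOn_le h0c hcc
    have hhb := hmh.eVariationOn_le h0c hcc
    rw [Set.inter_self] at hgb hhb
    have hgc : g c - g 0 = Real.log Q := by
      simp only [hgdef, hlog1c, sub_zero, Real.log_one]
      ring
    have hhc : h c - h 0 = Real.log Q - 1 := by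
      simp only [hhdef, if_neg (lt_irrefl c), if_pos hc0]
      ring
    rw [hgc] at hgb
    rw [hhc] at hhb
    calc eVariationOn f (Set.Icc 0 c)
        = eVariationOn (fun x => g x - h x) (Set.Icc 0 c) := heq
      _ ≤ eVariationOn g (Set.Icc 0 c) + eVariationOn h (Set.Icc 0 c) :=
          eVariationOn_sub_le g h _
      _ ≤ ENNReal.ofReal (Real.log Q) + ENNReal.ofReal (Real.log Q - 1) :=
          add_le_add hgb hhb
      _ = ENNReal.ofReal (2 * Real.log Q - 1) := by
          rw [← ENNReal.ofReal_add (by linarith) (by linarith)]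
          ring_nf
  -- Step C: lower bound on Icc 0 c, up to ε
  have hlb : ∀ ε : ℝ, 0 < ε → ε ≤ 1 →
      ENNReal.ofReal (2 * Real.log Q - 1 - 2 * ε) ≤ eVariationOn f (Set.Icc 0 c) := by
    intro ε hε hε1
    set x : ℝ := 1 - Real.exp ε / Q with hxdef
    have hexpε1 : 1 < Real.exp ε := by
      have := Real.exp_lt_exp.2 hε
      rwa [Real.exp_zero] at this
    have hexpε50 : Real.exp ε < 50 := by
      calc Real.exp ε ≤ Real.exp 1 := Real.exp_le_exp.2 hε1
        _ < 50 := by linarith [Real.exp_one_lt_d9]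
    have hxc : x < c := by
      rw [hxdef, hcdef]
      have : 1 / Q < Real.exp ε / Q := by gcongr
      linarith
    have hx0 : 0 ≤ x := by
      rw [hxdef]
      have : Real.exp ε / Q ≤ 1 := by
        rw [div_le_one hQ0]; linarith
      linarith
    have hfx : f x = Real.log Q - 1 - ε := by
      rw [hfdef]
      simp only [if_pos hxc]
      have h1x : 1 - x = Real.exp ε / Q := by rw [hxdef]; ring
      rw [h1x, Real.log_div (by positivity) (by positivity), Real.log_exp]
      ring
    have hfx0 : 0 ≤ f x := by rw [hfx]; linarith
    -- the test sequence 0, x, c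
    set u : ℕ → ℝ := fun i => if i = 0 then 0 else if i = 1 then x else c with hudef
    have hu : Monotone u := by
      apply monotone_nat_of_le_succ
      intro n
      match n with
      | 0 => simpa [hudef] using hx0
      | 1 => simpa [hudef] using hxc.le
      | (m+2) => simp [hudef]
    have hus : ∀ i, u i ∈ Set.Icc (0 : ℝ) c := by
      intro i
      match i with
      | 0 => exact ⟨le_refl _, hc0.le⟩
      | 1 => exact ⟨hx0, hxc.le⟩
      | (m+2) => exact ⟨hc0.le, le_refl _⟩
    have hsum := eVariationOn.sum_le (f := f) (n := 2) hu hus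
    have hu0 : u 0 = 0 := rfl
    have hu1 : u 1 = x := rfl
    have hu2 : u 2 = c := rfl
    rw [Finset.sum_range_succ, Finset.sum_range_one, hu0, hu1, hu2, hf0, hfc] at hsum
    have he1 : edist (f x) (-1 : ℝ) = ENNReal.ofReal (f x + 1) := by
      rw [edist_dist, Real.dist_eq]
      congr 1
      rw [abs_of_nonneg (by linarith)]
      ring
    have he2 : edist (0 : ℝ) (f x) = ENNReal.ofReal (f x) := by
      rw [edist_dist, Real.dist_eq]
      congr 1
      rw [abs_of_nonpos (by linarith)]
      ring
    rw [he1, he2, ← ENNReal.ofReal_add (by linarith) hfx0] at hsum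
    refine le_trans (le_of_eq ?_) hsum
    congr 1
    rw [hfx]
    ring
  -- finiteness
  have hne : eVariationOn f (Set.Icc 0 c) ≠ ⊤ :=
    (lt_of_le_of_lt hub ENNReal.ofReal_lt_top).ne
  -- conclude
  rw [hsplit]
  have hle : (eVariationOn f (Set.Icc 0 c)).toReal ≤ 2 * Real.log Q - 1 := by
    rw [← ENNReal.toReal_ofReal (by linarith : (0:ℝ) ≤ 2 * Real.log Q - 1)]
    exact ENNReal.toReal_mono ENNReal.ofReal_ne_top hub
  have hge : 2 * Real.log Q - 1 ≤ (eVariationOn f (Set.Icc 0 c)).toReal := by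
    apply le_of_forall_pos_le_add
    intro ε hε
    set ε' : ℝ := min (ε / 2) 1 with hε'def
    have hε'0 : 0 < ε' := lt_min (by linarith) one_pos
    have hε'1 : ε' ≤ 1 := min_le_right _ _
    have := hlb ε' hε'0 hε'1
    have h1 : 2 * Real.log Q - 1 - 2 * ε' ≤ (eVariationOn f (Set.Icc 0 c)).toReal := by
      calc 2 * Real.log Q - 1 - 2 * ε'
          ≤ max (2 * Real.log Q - 1 - 2 * ε') 0 := le_max_left _ _
        _ = (ENNReal.ofReal (2 * Real.log Q - 1 - 2 * ε')).toReal :=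
            (ENNReal.toReal_ofReal' ).symm
        _ ≤ (eVariationOn f (Set.Icc 0 c)).toReal := ENNReal.toReal_mono hne this
    have h2 : 2 * ε' ≤ ε := by
      calc 2 * ε' ≤ 2 * (ε / 2) := by
            apply mul_le_mul_of_nonneg_left (min_le_left _ _) (by norm_num)
        _ = ε := by ring
    linarith
  linarith
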